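/- Let X, Y, Q be finite-dimensional inner product spaces with linear maps G : Q → X and C : X → Y satisfying C∘G = 0, Ker C = Im G, the Poincaré–Wirtinger inequality ‖q‖ ≤ C_P ‖Gq‖ for q in the orthogonal complement of Ker G, and Poincaré inequality ‖ψ‖ ≤ C_C ‖Cψ‖ for ψ ⟂ Ker C. Then the mixed problem: find (u,p) ∈ X × Q₀ (Q₀ := (Ker G)^⊥) with ⟨Cu, Cv⟩ + ⟨Gp, v⟩ = L(v) for all v ∈ X and ⟨Gq, u⟩ = 0 for all q ∈ Q₀, has a unique solution for every linear functional L on X. -/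

import Mathlib

/-- Abstract well-posedness of the discrete Stokes mixed problem: if `C∘G = 0`,
`Ker C = Im G`, and the Poincaré–Wirtinger and Poincaré inequalities hold, then
for every linear functional `L` on `X` the mixed problem
`⟨Cu, Cv⟩ + ⟨Gp, v⟩ = L(v)` for all `v`, `⟨Gq, u⟩ = 0` for all `q ∈ Q₀ = (Ker G)ᗮ`
has a unique solution `(u, p) ∈ X × Q₀`. -/
theorem discrete_stokes_wellposed
    {X Y Q : Type*}
    [NormedAddCommGroup X] [InnerProductSpace ℝ X] [FiniteDimensional ℝ X]
    [NormedAddCommGroup Y] [InnerProductSpace ℝ Y] [FiniteDimensional ℝ Y]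
    [NormedAddCommGroup Q] [InnerProductSpace ℝ Q] [FiniteDimensional ℝ Q]
    (G : Q →ₗ[ℝ] X) (C : X →ₗ[ℝ] Y)
    (hCG : ∀ q, C (G q) = 0)
    (hex : LinearMap.ker C = LinearMap.range G)
    (CP : ℝ) (hCP : 0 < CP) (hPW : ∀ q ∈ (LinearMap.ker G)ᗮ, ‖q‖ ≤ CP * ‖G q‖)
    (CC : ℝ) (hCC : 0 < CC) (hP : ∀ ψ ∈ (LinearMap.ker C)ᗮ, ‖ψ‖ ≤ CC * ‖C ψ‖)
    (L : X →ₗ[ℝ] ℝ) :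
    ∃! up : X × (LinearMap.ker G)ᗮ,
      (∀ v : X, (inner ℝ (C up.1) (C v) : ℝ) + (inner ℝ (G (up.2 : Q)) v : ℝ) = L v) ∧
      (∀ q ∈ (LinearMap.ker G)ᗮ, (inner ℝ (G q) up.1 : ℝ) = 0) := by
  classical
  set Q₀ : Submodule ℝ Q := (LinearMap.ker G)ᗮ with hQ₀
  let G₀ : Q₀ →ₗ[ℝ] X := G ∘ₗ Q₀.subtype
  let A : X →ₗ[ℝ] X := LinearMap.adjoint C ∘ₗ C
  let B : X →ₗ[ℝ] Q₀ := LinearMap.adjoint G₀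
  let M : (X × Q₀) →ₗ[ℝ] (X × Q₀) :=
    (A ∘ₗ LinearMap.fst ℝ X Q₀ + G₀ ∘ₗ LinearMap.snd ℝ X Q₀).prod
      (B ∘ₗ LinearMap.fst ℝ X Q₀)
  have hMapp : ∀ z : X × Q₀, M z = (A z.1 + G₀ z.2, B z.1) := fun z => rfl
  have hAapp : ∀ u v : X, (inner ℝ (A u) v : ℝ) = inner ℝ (C u) (C v) :=
    fun u v => LinearMap.adjoint_inner_left C v (C u)
  have hG₀app : ∀ (p : Q₀) (v : X), (inner ℝ (G₀ p) v : ℝ) = inner ℝ (G (p : Q)) v :=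
    fun p v => rfl
  have hBapp : ∀ (p : Q₀) (u : X), (inner ℝ p (B u) : ℝ) = inner ℝ (G (p : Q)) u :=
    fun p u => LinearMap.adjoint_inner_right G₀ p u
  -- cond2 characterization
  have hB : ∀ u : X, (B u = 0 ↔ ∀ q ∈ Q₀, (inner ℝ (G q) u : ℝ) = 0) := by
    intro u
    constructor
    · intro h q hq
      have := hBapp ⟨q, hq⟩ u
      rw [h, inner_zero_right] at this
      exact this.symm
    · intro h
      refine ext_inner_left ℝ fun q' => ?_
      rw [inner_zero_right, hBapp q' u]
      exact h q'.1 q'.2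
  -- u perpendicular to ker C
  have hperp : ∀ u : X, (∀ q ∈ Q₀, (inner ℝ (G q) u : ℝ) = 0) →
      u ∈ (LinearMap.ker C)ᗮ := by
    intro u hu w hw
    rw [hex] at hw
    obtain ⟨q, rfl⟩ := hw
    have hq : (↑(Submodule.orthogonalProjectionOnto (LinearMap.ker G) q) : Q)
        + (↑(Submodule.orthogonalProjectionOnto (LinearMap.ker G)ᗮ q) : Q) = q :=
      Submodule.starProjection_add_starProjection_orthogonal (K := LinearMap.ker G) q
    have hGq : G q = G (↑(Submodule.orthogonalProjectionOnto (LinearMap.ker G)ᗮ q) : Q) := by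
      conv_lhs => rw [← hq]
      rw [map_add]
      have h0 : G (↑(Submodule.orthogonalProjectionOnto (LinearMap.ker G) q) : Q) = 0 :=
        (Submodule.orthogonalProjectionOnto (LinearMap.ker G) q).2
      rw [h0, zero_add]
    rw [hGq]
    exact hu _ (Submodule.orthogonalProjectionOnto (LinearMap.ker G)ᗮ q).2
  -- injectivity of M
  have hMinj : Function.Injective M := by
    rw [← LinearMap.ker_eq_bot, LinearMap.ker_eq_bot']
    intro z hz
    rw [hMapp z, Prod.mk_eq_zero] at hz
    obtain ⟨h1, h2⟩ := hz
    have hcond2 : ∀ q ∈ Q₀, (inner ℝ (G q) z.1 : ℝ) = 0 := (hB z.1).mp h2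
    have hGpu : (inner ℝ (G₀ z.2) z.1 : ℝ) = 0 := by
      rw [hG₀app, ← hBapp z.2 z.1, h2, inner_zero_right]
    have hCu : C z.1 = 0 := by
      have h0 : (inner ℝ (A z.1 + G₀ z.2) z.1 : ℝ) = 0 := by rw [h1, inner_zero_left]
      rw [inner_add_left, hGpu, add_zero, hAapp] at h0
      exact inner_self_eq_zero.mp h0
    have hu0 : z.1 = 0 := by
      have hmem : z.1 ∈ LinearMap.ker C := hCu
      exact inner_self_eq_zero.mp (hperp z.1 hcond2 z.1 hmem)
    have hp0 : z.2 = 0 := by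
      have hG0 : G₀ z.2 = 0 := by
        have hA0 : A z.1 = 0 := by rw [hu0]; simp
        rw [hA0, zero_add] at h1; exact h1
      have hk : (z.2 : Q) ∈ LinearMap.ker G := hG0
      have : (inner ℝ (z.2 : Q) (z.2 : Q) : ℝ) = 0 := z.2.2 (z.2 : Q) hk
      exact Subtype.ext (inner_self_eq_zero.mp this)
    exact Prod.ext hu0 hp0
  have hMsurj : Function.Surjective M := LinearMap.injective_iff_surjective.mp hMinj
  -- Riesz representation of L
  obtain ⟨ℓ, hℓ⟩ : ∃ ℓ : X, ∀ v : X, (inner ℝ ℓ v : ℝ) = L v :=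
    ⟨(InnerProductSpace.toDual ℝ X).symm (LinearMap.toContinuousLinearMap L),
      fun v => by rw [InnerProductSpace.toDual_symm_apply]; rfl⟩
  -- characterization of the problem
  have hchar : ∀ up : X × Q₀,
      ((∀ v : X, (inner ℝ (C up.1) (C v) : ℝ) + (inner ℝ (G (up.2 : Q)) v : ℝ) = L v) ∧
       (∀ q ∈ Q₀, (inner ℝ (G q) up.1 : ℝ) = 0)) ↔ M up = (ℓ, 0) := by
    intro up
    rw [hMapp up, Prod.mk.injEq]
    constructor
    · rintro ⟨h1, h2⟩
      refine ⟨ext_inner_right ℝ fun v => ?_, (hB up.1).mpr h2⟩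
      rw [inner_add_left, hℓ v, hAapp, hG₀app]
      exact h1 v
    · rintro ⟨h1, h2⟩
      refine ⟨fun v => ?_, (hB up.1).mp h2⟩
      have h3 : (inner ℝ (A up.1 + G₀ up.2) v : ℝ) = inner ℝ ℓ v := by rw [h1]
      rw [inner_add_left, hAapp, hG₀app, hℓ v] at h3
      exact h3
  obtain ⟨z, hz⟩ := hMsurj (ℓ, 0)
  exact ⟨z, (hchar z).mpr hz, fun w hw => hMinj (by rw [(hchar w).mp hw, hz])⟩
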